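/- For a positive real β, the eigenvalue E(k) = Σ_i b_i² + β Σ_i (2i−n−1) b_i + β²n(n²−1)/12, where b_i is the level part of k_i, separates levels: if k, l are strictly decreasing integer sequences with equal sums and the level sequence of l strictly dominates that of k (in particular is different), then E(k) ≠ E(l). -/

import Mathlib

/-- Partial sum of the first entries of a sequence, up to index `i`. -/
def partialSum {n : ℕ} (k : Fin n → ℤ) (i : Fin n) : ℤ :=
  ∑ j ∈ Finset.univ.filter (fun j => j ≤ i), k j

/-- Dominance relation: `domLE k l` means `k` dominates `l`. -/
def domLE {n : ℕ} (k l : Fin n → ℤ) : Prop :=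
  ∀ i : Fin n, partialSum l i ≤ partialSum k i

/-- The eigenvalue `E(k) = Σ b_i² + β Σ (2i−n−1) b_i + β²n(n²−1)/12`, computed from
the level sequence `b` (here `i` is 1-indexed, so the coefficient is `2(i+1)−n−1`
for the `Fin n` index `i`). -/
noncomputable def Eval (β : ℝ) (n : ℕ) (b : Fin n → ℤ) : ℝ :=
  (∑ i : Fin n, ((b i : ℝ)) ^ 2) + β * (∑ i : Fin n, ((2 * ((i : ℕ) : ℝ) + 1) - n) * (b i : ℝ))
    + β ^ 2 * n * (n ^ 2 - 1) / 12

def levFun {n : ℕ} (f : Fin n → ℤ) : ℕ → ℤ :=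
  fun j => if h : j < n then f (Fin.rev ⟨j, h⟩) else 0

lemma levFun_pos {n : ℕ} (f : Fin n → ℤ) {j : ℕ} (h : j < n) :
    levFun f j = f (Fin.rev ⟨j, h⟩) := dif_pos h

lemma sum_rev_range {n : ℕ} (f : Fin n → ℤ) :
    (∑ i, f i) = ∑ j ∈ Finset.range n, levFun f j := by
  rw [← Fin.sum_univ_eq_sum_range (levFun f) n]
  have h1 : ∀ i : Fin n, levFun f (i : ℕ) = f i.rev := by
    intro i; rw [levFun_pos f i.isLt]
  rw [Finset.sum_congr rfl fun i _ => h1 i]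
  exact (Fintype.sum_bijective Fin.rev Fin.rev_involutive.bijective _ _ fun x => rfl).symm

lemma partialSum_eq {n : ℕ} (f : Fin n → ℤ) (i : Fin n) :
    partialSum f i = ∑ j ∈ Finset.range ((i : ℕ) + 1),
      (if h : j < n then f ⟨j, h⟩ else 0) := by
  unfold partialSum
  refine Finset.sum_bij' (fun (j : Fin n) _ => (j : ℕ))
    (fun m hm => (⟨m, by have := Finset.mem_range.mp hm; have := i.isLt; omega⟩ : Fin n))
    ?_ ?_ ?_ ?_ ?_
  · intro a ha; simp only [Finset.mem_filter, Finset.mem_univ, true_and] at ha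
    simp only [Finset.mem_range]; exact Nat.lt_succ_of_le ha
  · intro m hm; simp only [Finset.mem_filter, Finset.mem_univ, true_and]
    have := Finset.mem_range.mp hm
    exact Fin.mk_le_of_le_val (by omega)
  · intro a ha; simp
  · intro m hm; simp
  · intro a ha; rw [dif_pos a.isLt]

lemma abelZero (n : ℕ) (c g : ℕ → ℤ) (h0 : ∑ j ∈ Finset.range n, g j = 0) :
    ∑ j ∈ Finset.range n, c j * g j
      = ∑ i ∈ Finset.range (n - 1), (c i - c (i + 1)) * (∑ j ∈ Finset.range (i + 1), g j) := by
  have h := Finset.sum_range_by_parts c g n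
  simp only [smul_eq_mul] at h
  rw [h, h0, mul_zero, zero_sub, ← Finset.sum_neg_distrib]
  exact Finset.sum_congr rfl fun i _ => by ring

lemma levelMono {n N : ℕ} (hN : 0 < N) {k a b : Fin n → ℤ}
    (hk : StrictAnti k) (ha : ∀ i, 1 ≤ a i ∧ a i ≤ N)
    (hkd : ∀ i, k i = a i - N * b i) : Monotone b := by
  cases n with
  | zero => exact fun i => i.elim0
  | succ m =>
    rw [Fin.monotone_iff_le_succ]
    intro i
    have h1 : k i.succ < k i.castSucc := hk (Fin.castSucc_lt_succ (i := i))
    have h2 := ha i.castSucc; have h3 := ha i.succ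
    have e1 := hkd i.castSucc; have e2 := hkd i.succ
    by_contra hcon
    push_neg at hcon
    have hstep : b i.succ + 1 ≤ b i.castSucc := by omega
    have := mul_le_mul_of_nonneg_left hstep (by positivity : (0:ℤ) ≤ (N:ℤ))
    have hN' : (1:ℤ) ≤ (N:ℤ) := by exact_mod_cast hN
    nlinarith

/-- For positive real `β` the eigenvalue separates levels: if `k, l` are strictly
decreasing integer sequences with equal sums whose level sequences are `b`, `d`
(residue parts `a i, c i ∈ {1,…,N}`), and the reversed level sequence of `l`
strictly dominates that of `k`, then `E(k) ≠ E(l)`. -/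
theorem stmt8 (N n : ℕ) (hN : 0 < N) (hn : 0 < n) (β : ℝ) (hβ : 0 < β)
    (k l a b c d : Fin n → ℤ)
    (hk : StrictAnti k) (hl : StrictAnti l)
    (hsum : (∑ i, k i) = ∑ i, l i)
    (ha : ∀ i, 1 ≤ a i ∧ a i ≤ N) (hc : ∀ i, 1 ≤ c i ∧ c i ≤ N)
    (hkd : ∀ i, k i = a i - N * b i) (hld : ∀ i, l i = c i - N * d i)
    (hlev_sum : (∑ i, d i) = ∑ i, b i)
    (hlev_dom : domLE (fun i : Fin n => d i.rev) (fun i : Fin n => b i.rev))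
    (hlev_ne : (fun i : Fin n => d i.rev) ≠ (fun i : Fin n => b i.rev)) :
    Eval β n b ≠ Eval β n d := by
  classical
  have hbmono : Monotone b := levelMono hN hk ha hkd
  have hdmono : Monotone d := levelMono hN hl hc hld
  set g : ℕ → ℤ := fun j => levFun d j - levFun b j with hg
  set S : ℕ → ℤ := fun m => ∑ j ∈ Finset.range m, g j with hSdef
  -- total sum zero
  have h0 : S n = 0 := by
    simp only [hSdef, hg, Finset.sum_sub_distrib]
    rw [← sum_rev_range d, ← sum_rev_range b, hlev_sum, sub_self]
  -- partial sums nonneg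
  have hS : ∀ m, m ≤ n → 0 ≤ S m := by
    intro m hm
    cases m with
    | zero => simp [hSdef]
    | succ t =>
      have ht : t < n := by omega
      have hdom := hlev_dom ⟨t, ht⟩
      rw [partialSum_eq, partialSum_eq] at hdom
      have hdom' : (∑ j ∈ Finset.range (t + 1), levFun b j)
          ≤ ∑ j ∈ Finset.range (t + 1), levFun d j := hdom
      simp only [hSdef, hg, Finset.sum_sub_distrib]
      omega
  -- the quadratic part
  set Q : ℤ := ∑ j ∈ Finset.range n, ((levFun d j) ^ 2 - (levFun b j) ^ 2) with hQdef
  set L : ℤ := ∑ j ∈ Finset.range n, ((n : ℤ) - 1 - 2 * j) * g j with hLdef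
  -- minimal difference index
  have hne : ∃ m, g m ≠ 0 := by
    obtain ⟨i, hi⟩ := Function.ne_iff.mp hlev_ne
    refine ⟨(i : ℕ), ?_⟩
    have : levFun d (i : ℕ) = d i.rev := by rw [levFun_pos d i.isLt]
    have hb' : levFun b (i : ℕ) = b i.rev := by rw [levFun_pos b i.isLt]
    simp only [hg, this, hb']
    exact sub_ne_zero.mpr hi
  set i0 := Nat.find hne with hi0def
  have hgi0 : g i0 ≠ 0 := Nat.find_spec hne
  have hmin : ∀ m, m < i0 → g m = 0 := fun m hm => not_not.mp (Nat.find_min hne hm)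
  have hi0lt : i0 < n := by
    by_contra hcon
    push_neg at hcon
    apply hgi0
    simp only [hg, levFun, dif_neg (by omega : ¬ i0 < n), sub_self]
  have hSi0 : S (i0 + 1) = g i0 := by
    simp only [hSdef, Finset.sum_range_succ]
    rw [Finset.sum_eq_zero fun m hm => hmin m (Finset.mem_range.mp hm), zero_add]
  have hSi0pos : 0 < S (i0 + 1) := by
    refine lt_of_le_of_ne (hS _ (by omega)) ?_
    rw [hSi0]; exact fun h => hgi0 h.symm
  have hi0n : i0 < n - 1 := by
    rcases lt_or_ge i0 (n - 1) with h | h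
    · exact h
    · exfalso
      have : i0 = n - 1 := by omega
      have : i0 + 1 = n := by omega
      rw [this] at hSi0pos
      omega
  -- L > 0
  have hL : 0 < L := by
    rw [hLdef, abelZero n (fun j => (n : ℤ) - 1 - 2 * j) g h0]
    apply Finset.sum_pos'
    · intro i _
      have hco : ((n : ℤ) - 1 - 2 * (i : ℕ)) - ((n : ℤ) - 1 - 2 * ((i : ℕ) + 1 : ℕ)) = 2 := by
        push_cast; ring
      rw [hco]
      have := hS (i + 1) (by have := Finset.mem_range.mp ‹i ∈ Finset.range (n-1)›; omega)
      simp only [hSdef] at this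
      omega
    · refine ⟨i0, Finset.mem_range.mpr hi0n, ?_⟩
      have hco : ((n : ℤ) - 1 - 2 * (i0 : ℕ)) - ((n : ℤ) - 1 - 2 * ((i0 : ℕ) + 1 : ℕ)) = 2 := by
        push_cast; ring
      rw [hco]
      simp only [hSdef] at hSi0pos
      omega
  -- Q ≥ 0
  have hQ : 0 ≤ Q := by
    have hQ2 : Q = ∑ j ∈ Finset.range n, (levFun d j + levFun b j) * g j :=
      Finset.sum_congr rfl fun j _ => by simp only [hg]; ring
    rw [hQ2, abelZero n (fun j => levFun d j + levFun b j) g h0]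
    apply Finset.sum_nonneg
    intro i hi
    have hi' : i < n - 1 := Finset.mem_range.mp hi
    have hi1 : i < n := by omega
    have hi2 : i + 1 < n := by omega
    have hrev : (⟨i + 1, hi2⟩ : Fin n).rev ≤ (⟨i, hi1⟩ : Fin n).rev :=
      Fin.rev_le_rev.mpr (by simp [Fin.le_def])
    have hd1 : levFun d (i + 1) ≤ levFun d i := by
      rw [levFun_pos d hi1, levFun_pos d hi2]; exact hdmono hrev
    have hb1 : levFun b (i + 1) ≤ levFun b i := by
      rw [levFun_pos b hi1, levFun_pos b hi2]; exact hbmono hrev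
    have hSnn := hS (i + 1) (by omega)
    simp only [hSdef] at hSnn
    have : (0:ℤ) ≤ (levFun d i + levFun b i) - (levFun d (i+1) + levFun b (i+1)) := by omega
    exact mul_nonneg this hSnn
  -- identify Eval difference with Q + β L
  have hqZ : (∑ i : Fin n, (d i) ^ 2) - (∑ i : Fin n, (b i) ^ 2) = Q := by
    rw [sum_rev_range (fun i => (d i) ^ 2), sum_rev_range (fun i => (b i) ^ 2),
      ← Finset.sum_sub_distrib, hQdef]
    refine Finset.sum_congr rfl fun j hj => ?_
    have hjn := Finset.mem_range.mp hj
    rw [levFun_pos _ hjn, levFun_pos _ hjn, levFun_pos d hjn, levFun_pos b hjn]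
  have hlinZ : (∑ i : Fin n, (2 * (i : ℤ) + 1 - (n : ℤ)) * (d i - b i)) = L := by
    rw [sum_rev_range (fun i => (2 * (i : ℤ) + 1 - (n : ℤ)) * (d i - b i)), hLdef]
    refine Finset.sum_congr rfl fun j hj => ?_
    have hjn := Finset.mem_range.mp hj
    rw [levFun_pos _ hjn]
    have hval : (((⟨j, hjn⟩ : Fin n).rev : ℕ) : ℤ) = (n : ℤ) - 1 - (j : ℤ) := by
      have : ((⟨j, hjn⟩ : Fin n).rev : ℕ) = n - 1 - j := by
        simp [Fin.val_rev]; omega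
      rw [this]; push_cast; omega
    rw [hval]
    simp only [hg, levFun_pos d hjn, levFun_pos b hjn]
    ring
  have hq : (∑ i : Fin n, ((d i : ℝ)) ^ 2) - (∑ i : Fin n, ((b i : ℝ)) ^ 2) = (Q : ℝ) := by
    rw [← hqZ]; push_cast; ring
  have hlin : (∑ i : Fin n, ((2 * ((i : ℕ) : ℝ) + 1) - n) * (d i : ℝ))
      - (∑ i : Fin n, ((2 * ((i : ℕ) : ℝ) + 1) - n) * (b i : ℝ)) = (L : ℝ) := by
    rw [← hlinZ]; push_cast
    rw [← Finset.sum_sub_distrib]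
    exact Finset.sum_congr rfl fun i _ => by ring
  have hkey : Eval β n d - Eval β n b = (Q : ℝ) + β * (L : ℝ) := by
    simp only [Eval]
    linear_combination hq + β * hlin
  have hQ' : (0:ℝ) ≤ (Q : ℝ) := by exact_mod_cast hQ
  have hL' : (1:ℝ) ≤ (L : ℝ) := by exact_mod_cast hL
  intro h
  rw [h, sub_self] at hkey
  nlinarith
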